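/- For a sequence of episodes where episode k contributes v_k visits to a fixed state-action pair, with cumulative counts n_k = max(1, v_1 + ... + v_{k-1}) and under the doubling condition v_k ≤ n_k for every k, it holds that the sum over k = 1 to m of v_k / sqrt(n_k) is at most 3 * sqrt(n_{m+1}), where n_{m+1} = max(1, v_1 + ... + v_m). -/

import Mathlib

lemma key_ineq (s w : ℝ) (hs : 1 ≤ s) (hw : 0 ≤ w) (hws : w ≤ s) :
    w / Real.sqrt s ≤ 3 * (Real.sqrt (s + w) - Real.sqrt s) := by
  have hs0 : (0:ℝ) < s := by linarith
  have hsq : 0 < Real.sqrt s := Real.sqrt_pos.mpr hs0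
  have hsw0 : 0 ≤ s + w := by linarith
  have h1 : Real.sqrt (s + w) ≤ 2 * Real.sqrt s := by
    have : Real.sqrt (s + w) ≤ Real.sqrt (4 * s) := by
      apply Real.sqrt_le_sqrt; linarith
    calc Real.sqrt (s + w) ≤ Real.sqrt (4 * s) := this
      _ = Real.sqrt 4 * Real.sqrt s := Real.sqrt_mul (by norm_num) s
      _ = 2 * Real.sqrt s := by
          rw [show (4:ℝ) = 2^2 by norm_num, Real.sqrt_sq (by norm_num)]
  have hsum : Real.sqrt (s + w) + Real.sqrt s ≤ 3 * Real.sqrt s := by linarith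
  have hsumpos : 0 < Real.sqrt (s + w) + Real.sqrt s := by positivity
  have hdiff : (Real.sqrt (s + w) - Real.sqrt s) * (Real.sqrt (s + w) + Real.sqrt s) = w := by
    have e1 : Real.sqrt (s + w) ^ 2 = s + w := Real.sq_sqrt hsw0
    have e2 : Real.sqrt s ^ 2 = s := Real.sq_sqrt hs0.le
    ring_nf
    nlinarith [e1, e2]
  have hdiff' : Real.sqrt (s + w) - Real.sqrt s = w / (Real.sqrt (s + w) + Real.sqrt s) := by
    field_simp
    linarith [hdiff]
  rw [hdiff', ← mul_div_assoc]
  rw [div_le_div_iff₀ hsq hsumpos]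
  nlinarith [mul_le_mul_of_nonneg_left hsum hw, hsq]

lemma aux_sum (v : ℕ → ℕ) (n : ℕ → ℕ)
    (hn : ∀ k, n k = max 1 (∑ i ∈ Finset.Ico 1 k, v i)) :
    ∀ M : ℕ, (∀ k ∈ Finset.Icc 1 M, v k ≤ n k) →
    ∑ k ∈ Finset.Icc 1 M, (v k : ℝ) / Real.sqrt (n k) ≤
      3 * Real.sqrt (∑ i ∈ Finset.Icc 1 M, (v i : ℝ)) := by
  intro M
  induction M with
  | zero => intro _; simp
  | succ M ih =>
    intro hdbl
    have hsub : ∀ k ∈ Finset.Icc 1 M, v k ≤ n k := by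
      intro k hk
      apply hdbl
      simp only [Finset.mem_Icc] at hk ⊢
      omega
    have hIH := ih hsub
    have hico : Finset.Ico 1 (M + 1) = Finset.Icc 1 M := rfl
    have hsplit : ∑ k ∈ Finset.Icc 1 (M+1), (v k : ℝ) / Real.sqrt (n k)
        = (∑ k ∈ Finset.Icc 1 M, (v k : ℝ) / Real.sqrt (n k))
          + (v (M+1) : ℝ) / Real.sqrt (n (M+1)) :=
      Finset.sum_Icc_succ_top (by omega) _
    have hsplit2 : ∑ i ∈ Finset.Icc 1 (M+1), (v i : ℝ)
        = (∑ i ∈ Finset.Icc 1 M, (v i : ℝ)) + (v (M+1) : ℝ) :=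
      Finset.sum_Icc_succ_top (by omega) _
    set Snat := ∑ i ∈ Finset.Icc 1 M, v i with hSnat
    have hScast : (∑ i ∈ Finset.Icc 1 M, (v i : ℝ)) = (Snat : ℝ) := by
      rw [hSnat]; push_cast; ring
    have hnM1 : n (M+1) = max 1 Snat := by rw [hn (M+1), hico]
    have hvle : v (M+1) ≤ n (M+1) := hdbl (M+1) (by simp)
    rw [hScast] at hIH
    rw [hsplit, hsplit2, hScast]
    by_cases hS0 : Snat = 0
    · -- all previous v are 0-ish; S = 0
      have hn1 : n (M+1) = 1 := by rw [hnM1, hS0]; simp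
      have hv1 : v (M+1) ≤ 1 := by rw [hn1] at hvle; exact hvle
      have hterm : (v (M+1) : ℝ) / Real.sqrt (n (M+1)) = (v (M+1) : ℝ) := by
        rw [hn1]; simp
      rw [hterm, hS0]
      simp only [Nat.cast_zero, Real.sqrt_zero, mul_zero, zero_add] at *
      have hIH0 : ∑ k ∈ Finset.Icc 1 M, (v k : ℝ) / Real.sqrt (n k) ≤ 0 := by
        rw [hS0] at hIH; simpa using hIH
      interval_cases h : v (M+1)
      · simpa using hIH0
      · have : Real.sqrt 1 = 1 := Real.sqrt_one
        push_cast
        rw [this]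
        linarith [hIH0]
    · have hS1 : 1 ≤ Snat := Nat.one_le_iff_ne_zero.mpr hS0
      have hnS : n (M+1) = Snat := by rw [hnM1]; omega
      have hvS : v (M+1) ≤ Snat := by rw [hnS] at hvle; exact hvle
      have hkey := key_ineq (Snat : ℝ) (v (M+1) : ℝ)
        (by exact_mod_cast hS1) (by positivity) (by exact_mod_cast hvS)
      rw [hnS]
      have : 3 * Real.sqrt ((Snat : ℝ) + (v (M+1) : ℝ))
          = 3 * Real.sqrt (Snat : ℝ)
            + 3 * (Real.sqrt ((Snat : ℝ) + (v (M+1) : ℝ)) - Real.sqrt (Snat : ℝ)) := by ring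
      rw [this]
      exact add_le_add hIH hkey

theorem stmt_0 (m : ℕ) (hm : 1 ≤ m) (v : ℕ → ℕ) (n : ℕ → ℕ)
    (hn : ∀ k, n k = max 1 (∑ i ∈ Finset.Ico 1 k, v i))
    (hdbl : ∀ k ∈ Finset.Icc 1 m, v k ≤ n k) :
    ∑ k ∈ Finset.Icc 1 m, (v k : ℝ) / Real.sqrt (n k) ≤ 3 * Real.sqrt (n (m + 1)) := by
  have h := aux_sum v n hn m hdbl
  have hico : Finset.Ico 1 (m + 1) = Finset.Icc 1 m := rfl
  have hnm : n (m+1) = max 1 (∑ i ∈ Finset.Icc 1 m, v i) := by rw [hn (m+1), hico]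
  have hle : (∑ i ∈ Finset.Icc 1 m, (v i : ℝ)) ≤ (n (m+1) : ℝ) := by
    rw [hnm]
    push_cast [Nat.cast_max]
    have : (∑ i ∈ Finset.Icc 1 m, (v i : ℝ)) ≤ max 1 (∑ i ∈ Finset.Icc 1 m, (v i : ℝ)) :=
      le_max_right _ _
    exact this
  calc ∑ k ∈ Finset.Icc 1 m, (v k : ℝ) / Real.sqrt (n k)
      ≤ 3 * Real.sqrt (∑ i ∈ Finset.Icc 1 m, (v i : ℝ)) := h
    _ ≤ 3 * Real.sqrt (n (m+1)) := by
        have := Real.sqrt_le_sqrt hle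
        linarith
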